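/- A locally decisive computation has exactly one source pool in its pool graph. -/
import Mathlib


/-- A journey from `m` to `m'` starting after round `r`: a nonempty temporal path of links
occurring in strictly increasing rounds, all after `r`. -/
def Journey {M : Type} (link : ℕ → M → M → Prop) (r : ℕ) (m m' : M) : Prop :=
  ∃ (k : ℕ) (f : ℕ → M) (t : ℕ → ℕ),
    0 < k ∧ f 0 = m ∧ f k = m' ∧
    (∀ i, i < k → link (t i) (f i) (f (i + 1))) ∧
    (∀ i, i < k → r < t i) ∧
    (∀ i j, i < j → j < k → t i < t j)

/-- `m` has infinitely many journeys to `m'`: journeys starting arbitrarily late. -/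
def InfJ {M : Type} (link : ℕ → M → M → Prop) (m m' : M) : Prop :=
  ∀ r : ℕ, Journey link r m m'

/-- The pool relation: equal, or infinitely many journeys in both directions. -/
def PoolRel {M : Type} (link : ℕ → M → M → Prop) (m m' : M) : Prop :=
  m = m' ∨ (InfJ link m m' ∧ InfJ link m' m)

/-- A mining pool: an equivalence class of the pool relation. -/
def IsPool {M : Type} (link : ℕ → M → M → Prop) (P : Set M) : Prop :=
  ∃ m : M, P = {m' | PoolRel link m m'}

/-- Pool-graph edge: infinitely many rounds contain a link from `P1` to `P2`. -/
def PoolEdge {M : Type} (link : ℕ → M → M → Prop) (P1 P2 : Set M) : Prop :=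
  ∀ r : ℕ, ∃ ρ, r < ρ ∧ ∃ m1 ∈ P1, ∃ m2 ∈ P2, link ρ m1 m2

/-- Edge of the pool graph (between pools). -/
def PGEdge {M : Type} (link : ℕ → M → M → Prop) (P1 P2 : Set M) : Prop :=
  IsPool link P1 ∧ IsPool link P2 ∧ PoolEdge link P1 P2

/-- A source pool: a pool with only finitely many journeys from outside miners into it,
i.e. no outside miner has infinitely many journeys to a pool member. -/
def SourcePool {M : Type} (link : ℕ → M → M → Prop) (P : Set M) : Prop :=
  IsPool link P ∧ ∀ m, m ∉ P → ∀ m' ∈ P, ¬ InfJ link m m'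

lemma journey_mono {M : Type} {link : ℕ → M → M → Prop} {r r' : ℕ} {m m' : M}
    (h : r ≤ r') (hj : Journey link r' m m') : Journey link r m m' := by
  obtain ⟨k, g, t, hk, h0, hke, hl, hr, hm⟩ := hj
  exact ⟨k, g, t, hk, h0, hke, hl, fun i hi => lt_of_le_of_lt h (hr i hi), hm⟩

lemma journey_comp {M : Type} {link : ℕ → M → M → Prop} {r : ℕ} {m m' m'' : M}
    (h1 : Journey link r m m') (h2 : InfJ link m' m'') : Journey link r m m'' := by
  obtain ⟨k, g, t, hk, h0, hke, hl, hr, hm⟩ := h1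
  obtain ⟨k', g', t', hk', h0', hke', hl', hr', hm'⟩ := h2 (t (k - 1))
  refine ⟨k + k', fun i => if i < k then g i else g' (i - k),
    fun i => if i < k then t i else t' (i - k), by omega, ?_, ?_, ?_, ?_, ?_⟩
  · simp [hk, h0]
  · simp only [show ¬ (k + k' < k) by omega, if_false]
    rw [show k + k' - k = k' by omega, hke']
  · intro i hi
    by_cases hik : i < k
    · by_cases hik1 : i + 1 < k
      · simpa [hik, hik1] using hl i hik
      · have hik1' : i + 1 = k := by omega
        have := hl i hik
        simp only [hik, if_true, show ¬ (i + 1 < k) by omega, if_false]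
        rw [show i + 1 - k = 0 by omega, h0', ← hke, ← hik1']
        exact this
    · have h1k : ¬ (i + 1 < k) := by omega
      simp only [hik, h1k, if_false]
      rw [show i + 1 - k = (i - k) + 1 by omega]
      exact hl' (i - k) (by omega)
  · intro i hi
    by_cases hik : i < k
    · simpa [hik] using hr i hik
    · simp only [hik, if_false]
      exact lt_trans (hr (k - 1) (by omega)) (hr' (i - k) (by omega))
  · intro i j hij hj
    by_cases hjk : j < k
    · simp [show i < k by omega, hjk, hm i j hij hjk]
    · by_cases hik : i < k
      · simp only [hik, if_true, hjk, if_false]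
        have h1 : t i ≤ t (k - 1) := by
          rcases eq_or_lt_of_le (show i ≤ k - 1 by omega) with h | h
          · rw [h]
          · exact le_of_lt (hm i (k - 1) h (by omega))
        exact lt_of_le_of_lt h1 (hr' (j - k) (by omega))
      · simp only [hik, hjk, if_false]
        exact hm' (i - k) (j - k) (by omega) (by omega)

lemma infj_trans {M : Type} {link : ℕ → M → M → Prop} {m m' m'' : M}
    (h1 : InfJ link m m') (h2 : InfJ link m' m'') : InfJ link m m'' :=
  fun r => journey_comp (h1 r) h2

lemma poolrel_symm {M : Type} {link : ℕ → M → M → Prop} {m m' : M}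
    (h : PoolRel link m m') : PoolRel link m' m := by
  rcases h with h | ⟨h1, h2⟩
  · exact Or.inl h.symm
  · exact Or.inr ⟨h2, h1⟩

lemma poolrel_trans {M : Type} {link : ℕ → M → M → Prop} {m m' m'' : M}
    (h1 : PoolRel link m m') (h2 : PoolRel link m' m'') : PoolRel link m m'' := by
  rcases h1 with rfl | ⟨ha, hb⟩
  · exact h2
  · rcases h2 with rfl | ⟨hc, hd⟩
    · exact Or.inr ⟨ha, hb⟩
    · exact Or.inr ⟨infj_trans ha hc, infj_trans hd hb⟩

/-- A locally decisive computation has exactly one source pool. The unique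
infinite branch `f` (miners `mnr`, strictly increasing mining rounds `mt`) belongs to a
pool `P`, and every miner receives every block of the branch (via a journey from the
mining miner after the mining round). Conclusion: there is exactly one source pool. -/
theorem stmt_13 {M B : Type} [Fintype M] (link : ℕ → M → M → Prop)
    (f : ℕ → B) (mnr : B → M) (mt : B → ℕ)
    (hmono : StrictMono (fun n => mt (f n)))
    (P : Set M) (hP : IsPool link P)
    (hbelong : ∃ n0 : ℕ, ∀ n, n0 ≤ n → mnr (f n) ∈ P)
    (hrecv : ∀ n : ℕ, ∀ m : M, m ≠ mnr (f n) → Journey link (mt (f n)) (mnr (f n)) m) :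
    ∃ SP : Set M, SourcePool link SP ∧ ∀ Q : Set M, SourcePool link Q → Q = SP := by
  obtain ⟨n0, hn0⟩ := hbelong
  obtain ⟨m0, hm0⟩ := hP
  -- Helper: every miner outside P receives infinitely many journeys from
  -- some fixed miner of P.
  have helper : ∀ m : M, m ∉ P → ∃ ms ∈ P, InfJ link ms m := by
    intro m hm
    set g : ℕ → M := fun s => mnr (f (max n0 (s + 1))) with hg
    have hgP : ∀ s, g s ∈ P := fun s => hn0 _ (le_max_left _ _)
    have hgj : ∀ s, Journey link s (g s) m := by
      intro s
      have hne : m ≠ mnr (f (max n0 (s + 1))) := fun h => hm (h ▸ hgP s)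
      have hj := hrecv (max n0 (s + 1)) m hne
      have hle : s ≤ mt (f (max n0 (s + 1))) :=
        le_trans (by omega : s ≤ max n0 (s + 1)) hmono.le_apply
      exact journey_mono hle hj
    obtain ⟨ms, hms⟩ := Finite.exists_infinite_fiber g
    have hmsinf : (g ⁻¹' {ms}).Infinite := Set.infinite_coe_iff.mp hms
    obtain ⟨s0, hs0⟩ := hmsinf.nonempty
    refine ⟨ms, hs0 ▸ hgP s0, ?_⟩
    intro r
    obtain ⟨s, hs, hrs⟩ := hmsinf.exists_gt r
    have hgs : g s = ms := hs
    exact hgs ▸ journey_mono (le_of_lt hrs) (hgj s)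
  -- P is a source pool.
  have hPsrc : SourcePool link P := by
    refine ⟨⟨m0, hm0⟩, ?_⟩
    intro m hm m' hm' hinf
    obtain ⟨ms, hmsP, hmsInf⟩ := helper m hm
    -- InfJ m0 m
    have h1 : InfJ link m0 m := by
      have : PoolRel link m0 ms := by rw [hm0] at hmsP; exact hmsP
      rcases this with rfl | ⟨ha, _⟩
      · exact hmsInf
      · exact infj_trans ha hmsInf
    -- InfJ m m0
    have h2 : InfJ link m m0 := by
      have : PoolRel link m0 m' := by rw [hm0] at hm'; exact hm'
      rcases this with rfl | ⟨_, hb⟩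
      · exact hinf
      · exact infj_trans hinf hb
    exact hm (by rw [hm0]; exact Or.inr ⟨h1, h2⟩)
  refine ⟨P, hPsrc, ?_⟩
  -- Uniqueness
  intro Q hQ
  obtain ⟨⟨q0, hq0⟩, hQsrc⟩ := hQ
  have hq0Q : q0 ∈ Q := by rw [hq0]; exact Or.inl rfl
  -- Find a common member of Q and P.
  have hcommon : ∃ c, c ∈ Q ∧ c ∈ P := by
    by_cases hq0P : q0 ∈ P
    · exact ⟨q0, hq0Q, hq0P⟩
    · obtain ⟨ms, hmsP, hmsInf⟩ := helper q0 hq0P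
      refine ⟨ms, ?_, hmsP⟩
      by_contra hmsQ
      exact hQsrc ms hmsQ q0 hq0Q hmsInf
  obtain ⟨c, hcQ, hcP⟩ := hcommon
  rw [hq0] at hcQ
  rw [hm0] at hcP
  ext x
  rw [hq0, hm0]
  constructor
  · intro hx
    exact poolrel_trans hcP (poolrel_trans (poolrel_symm hcQ) hx)
  · intro hx
    exact poolrel_trans hcQ (poolrel_trans (poolrel_symm hcP) hx)
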